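/- Let x be a C-ℓ_1^k average in a Banach space with a bimonotone Schauder basis: x = (1/k)∑_{i=1}^k x_i with x_1 < ... < x_k successive blocks, ‖x_i‖ ≤ C for all i, and ‖x‖ ≥ 1. Then for every d ≤ k and every sequence of successive intervals E_1 < ... < E_d of ℕ, ∑_{i=1}^d ‖E_i x‖ ≤ C(1 + 2d/k), where E x denotes the restriction of x to coordinates in E. -/

import Mathlib

open Finset

/-- `x 0 < x 1 < ⋯ < x (k-1)` are successive blocks. -/
def SuccBlocks (x : ℕ → (ℕ → ℝ)) (k : ℕ) : Prop :=
  ∀ i j, i < j → j < k → ∀ p q, x i p ≠ 0 → x j q ≠ 0 → p < q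

/-- Let `N` be a norm on `c₀₀(ℕ)` which is bimonotone (restriction to an
interval of coordinates does not increase the norm).  If
`x = (1/k)(x_1 + ⋯ + x_k)` is a `C`-`ℓ₁ᵏ` average (successive blocks `x_i`
of norm at most `C`, `N x ≥ 1`), then for every `d ≤ k` and successive
intervals `E_1 < ⋯ < E_d` of `ℕ`,
`∑_{i=1}^d N(E_i x) ≤ C (1 + 2d/k)`. -/
theorem stmt18 (N : (ℕ → ℝ) → ℝ)
    (hnonneg : ∀ v, 0 ≤ N v)
    (htri : ∀ v w : ℕ → ℝ, N (v + w) ≤ N v + N w)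
    (hsmul : ∀ (c : ℝ) (v : ℕ → ℝ), N (c • v) = |c| * N v)
    (hbimono : ∀ (v : ℕ → ℝ) (E : Finset ℕ), (∃ a b, E = Finset.Icc a b) →
      N (fun p => if p ∈ E then v p else 0) ≤ N v)
    (C : ℝ) (hC : 1 ≤ C) (k : ℕ) (hk : 1 ≤ k)
    (x : ℕ → (ℕ → ℝ)) (hxsucc : SuccBlocks x k)
    (hxC : ∀ i < k, N (x i) ≤ C)
    (xavg : ℕ → ℝ) (hxavg : xavg = (1 / (k : ℝ)) • ∑ i ∈ range k, x i)
    (hxavg1 : 1 ≤ N xavg)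
    (d : ℕ) (hd : d ≤ k) (E : ℕ → Finset ℕ)
    (hEint : ∀ i < d, ∃ a b, E i = Finset.Icc a b)
    (hEsucc : ∀ i j, i < j → j < d → ∀ p ∈ E i, ∀ q ∈ E j, p < q) :
    ∑ i ∈ range d, N (fun p => if p ∈ E i then xavg p else 0) ≤
      C * (1 + 2 * (d : ℝ) / (k : ℝ)) := by
  classical
  have hkR : (0:ℝ) < (k:ℝ) := by exact_mod_cast Nat.lt_of_lt_of_le Nat.zero_lt_one hk
  have hN0 : N 0 = 0 := by
    have h := hsmul 0 0
    simpa using h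
  have hNsum : ∀ (s : Finset ℕ) (f : ℕ → ℕ → ℝ),
      N (∑ i ∈ s, f i) ≤ ∑ i ∈ s, N (f i) := by
    intro s f
    induction s using Finset.cons_induction with
    | empty => simp [hN0]
    | cons a s ha ih =>
        rw [Finset.sum_cons, Finset.sum_cons]
        exact le_trans (htri _ _) (by linarith)
  -- disjointness of the intervals
  have hEdisj : ∀ j j', j < d → j' < d → j ≠ j' → ∀ p, p ∈ E j → p ∈ E j' → False := by
    intro j j' hj hj' hne p hp hp'
    rcases Nat.lt_or_ge j j' with h | h
    · exact lt_irrefl p (hEsucc j j' h hj' p hp p hp')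
    · have hlt : j' < j := by omega
      exact lt_irrefl p (hEsucc j' j hlt hj p hp' p hp)
  -- per-interval bound
  have key : ∀ j, N (fun p => if p ∈ E j then xavg p else 0) ≤
      (1/(k:ℝ)) * ∑ i ∈ range k, N (fun p => if p ∈ E j then x i p else 0) := by
    intro j
    have h1 : (fun p => if p ∈ E j then xavg p else 0)
        = (1/(k:ℝ)) • (fun p => if p ∈ E j then (∑ i ∈ range k, x i) p else 0) := by
      funext p
      by_cases hp : p ∈ E j <;> simp [hxavg, hp]
    have h2 : (fun p => if p ∈ E j then (∑ i ∈ range k, x i) p else 0)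
        = ∑ i ∈ range k, (fun p => if p ∈ E j then x i p else 0) := by
      funext p
      by_cases hp : p ∈ E j <;> simp [hp, Finset.sum_apply]
    rw [h1, hsmul, h2, abs_of_pos (by positivity)]
    exact mul_le_mul_of_nonneg_left (hNsum _ _) (by positivity)
  -- the term for pair (j,i)
  set F : ℕ × ℕ → ℝ := fun q => N (fun p => if p ∈ E q.1 then x q.2 p else 0) with hF
  set T : Finset (ℕ × ℕ) :=
    (range d ×ˢ range k).filter (fun q => ∃ p ∈ E q.1, x q.2 p ≠ 0) with hT
  have hTmem : ∀ q ∈ T, q.1 < d ∧ q.2 < k := by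
    intro q hq
    rw [hT, Finset.mem_filter, Finset.mem_product, Finset.mem_range, Finset.mem_range] at hq
    exact hq.1
  have hTtouch : ∀ q ∈ T, ∃ p ∈ E q.1, x q.2 p ≠ 0 := by
    intro q hq
    rw [hT, Finset.mem_filter] at hq
    exact hq.2
  -- the double sum equals the sum over touching pairs
  have hdouble : ∑ j ∈ range d, ∑ i ∈ range k,
      N (fun p => if p ∈ E j then x i p else 0) = ∑ q ∈ T, F q := by
    rw [← Finset.sum_product']
    refine (Finset.sum_subset (Finset.filter_subset _ _) ?_).symm
    intro q hq hq'
    have hz : ∀ p ∈ E q.1, x q.2 p = 0 := by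
      by_contra hcon
      push_neg at hcon
      obtain ⟨p, hp1, hp2⟩ := hcon
      exact hq' (Finset.mem_filter.mpr ⟨hq, p, hp1, hp2⟩)
    have hzero : (fun p => if p ∈ E q.1 then x q.2 p else 0) = 0 := by
      funext p
      by_cases hp : p ∈ E q.1
      · simp [hp, hz p hp]
      · simp [hp]
    show N (fun p => if p ∈ E q.1 then x q.2 p else 0) = 0
    rw [hzero, hN0]
  -- each touching term is at most C
  have hFC : ∀ q ∈ T, F q ≤ C := by
    intro q hq
    exact le_trans (hbimono (x q.2) (E q.1) (hEint q.1 (hTmem q hq).1))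
      (hxC q.2 (hTmem q hq).2)
  -- counting: |T| ≤ k + 2d
  have hTcard : T.card ≤ k + 2 * d := by
    set A : Finset (ℕ × ℕ) := T.filter (fun q => ∀ p, x q.2 p ≠ 0 → p ∈ E q.1) with hA
    set Ba : Finset (ℕ × ℕ) := T.filter
      (fun q => ∃ p r, p ∈ E q.1 ∧ r ∉ E q.1 ∧ x q.2 p ≠ 0 ∧ x q.2 r ≠ 0 ∧ r < p) with hBa
    set Bb : Finset (ℕ × ℕ) := T.filter
      (fun q => ∃ p r, p ∈ E q.1 ∧ r ∉ E q.1 ∧ x q.2 p ≠ 0 ∧ x q.2 r ≠ 0 ∧ p < r) with hBb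
    have hsub : T ⊆ A ∪ Ba ∪ Bb := by
      intro q hq
      obtain ⟨p, hpE, hpx⟩ := hTtouch q hq
      by_cases hall : ∀ p, x q.2 p ≠ 0 → p ∈ E q.1
      · exact Finset.mem_union_left _ (Finset.mem_union_left _
          (Finset.mem_filter.mpr ⟨hq, hall⟩))
      · push_neg at hall
        obtain ⟨r, hrx, hrE⟩ := hall
        rcases lt_trichotomy r p with h | h | h
        · exact Finset.mem_union_left _ (Finset.mem_union_right _
            (Finset.mem_filter.mpr ⟨hq, p, r, hpE, hrE, hpx, hrx, h⟩))
        · exact absurd (h ▸ hpE) hrE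
        · exact Finset.mem_union_right _
            (Finset.mem_filter.mpr ⟨hq, p, r, hpE, hrE, hpx, hrx, h⟩)
    have hAcard : A.card ≤ k := by
      have : A.card ≤ (range k).card :=
        Finset.card_le_card_of_injOn (fun q => q.2)
          (fun q hq => Finset.mem_range.mpr
            (hTmem q (Finset.mem_filter.mp (Finset.mem_coe.mp hq)).1).2)
          (by
            intro q hq q' hq' heq
            simp only [Finset.mem_coe, hA, Finset.mem_filter] at hq hq'
            obtain ⟨hqT, hqall⟩ := hq
            obtain ⟨hq'T, hq'all⟩ := hq'
            have h2 : q.2 = q'.2 := heq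
            have h1 : q.1 = q'.1 := by
              by_contra hne
              obtain ⟨p, hpE, hpx⟩ := hTtouch q hqT
              have hpE' : p ∈ E q'.1 := hq'all p (by rw [← h2]; exact hpx)
              exact hEdisj q.1 q'.1 (hTmem q hqT).1 (hTmem q' hq'T).1 hne p hpE hpE'
            exact Prod.ext h1 h2)
      simpa using this
    -- boundary pairs: injective in the interval index
    have hbound : ∀ (side : Bool) (q q' : ℕ × ℕ), q ∈ T → q' ∈ T →
        q.1 = q'.1 →
        (∃ p r, p ∈ E q.1 ∧ r ∉ E q.1 ∧ x q.2 p ≠ 0 ∧ x q.2 r ≠ 0 ∧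
          (if side then r < p else p < r)) →
        (∃ p r, p ∈ E q'.1 ∧ r ∉ E q'.1 ∧ x q'.2 p ≠ 0 ∧ x q'.2 r ≠ 0 ∧
          (if side then r < p else p < r)) →
        q.2 = q'.2 := by
      intro side q q' hqT hq'T hj hq hq'
      by_contra hne
      obtain ⟨a, b, hab⟩ := hEint q.1 (hTmem q hqT).1
      obtain ⟨p, r, hpE, hrE, hpx, hrx, hlt⟩ := hq
      obtain ⟨p', r', hp'E, hr'E, hp'x, hr'x, hlt'⟩ := hq'
      rw [← hj, hab] at hp'E hr'E
      rw [hab] at hpE hrE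
      rw [Finset.mem_Icc] at hpE hp'E
      rw [Finset.mem_Icc] at hrE hr'E
      push_neg at hrE hr'E
      cases side with
      | true =>
          simp at hlt hlt'
          -- r < p ≤ b so r < a ; r' < a ≤ p'
          have hra : r < a := by
            by_contra hge
            push_neg at hge
            exact absurd (hrE hge) (not_lt.mpr (le_trans (le_of_lt hlt) hpE.2))
          have hr'a : r' < a := by
            by_contra hge
            push_neg at hge
            exact absurd (hr'E hge) (not_lt.mpr (le_trans (le_of_lt hlt') hp'E.2))
          rcases Nat.lt_or_ge q.2 q'.2 with h | h
          · have := hxsucc q.2 q'.2 h (hTmem q' hq'T).2 p r' hpx hr'x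
            omega
          · have hlt2 : q'.2 < q.2 := lt_of_le_of_ne h (fun hh => hne hh.symm)
            have := hxsucc q'.2 q.2 hlt2 (hTmem q hqT).2 p' r hp'x hrx
            omega
      | false =>
          simp at hlt hlt'
          -- p < r, p ≥ a so r > b ; similarly r' > b ≥ p'
          have hrb : b < r := by
            rcases Nat.lt_or_ge r a with h | h
            · omega
            · exact hrE h
          have hr'b : b < r' := by
            rcases Nat.lt_or_ge r' a with h | h
            · omega
            · exact hr'E h
          rcases Nat.lt_or_ge q.2 q'.2 with h | h
          · have := hxsucc q.2 q'.2 h (hTmem q' hq'T).2 r p' hrx hp'x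
            omega
          · have hlt2 : q'.2 < q.2 := lt_of_le_of_ne h (fun hh => hne hh.symm)
            have := hxsucc q'.2 q.2 hlt2 (hTmem q hqT).2 r' p hr'x hpx
            omega
    have hBacard : Ba.card ≤ d := by
      have : Ba.card ≤ (range d).card :=
        Finset.card_le_card_of_injOn (fun q => q.1)
          (fun q hq => Finset.mem_range.mpr
            (hTmem q (Finset.mem_filter.mp (Finset.mem_coe.mp hq)).1).1)
          (by
            intro q hq q' hq' heq
            simp only [Finset.mem_coe, hBa, Finset.mem_filter] at hq hq'
            have h1 : q.1 = q'.1 := heq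
            exact Prod.ext h1
              (hbound true q q' hq.1 hq'.1 h1 (by simpa using hq.2) (by simpa using hq'.2)))
      simpa using this
    have hBbcard : Bb.card ≤ d := by
      have : Bb.card ≤ (range d).card :=
        Finset.card_le_card_of_injOn (fun q => q.1)
          (fun q hq => Finset.mem_range.mpr
            (hTmem q (Finset.mem_filter.mp (Finset.mem_coe.mp hq)).1).1)
          (by
            intro q hq q' hq' heq
            simp only [Finset.mem_coe, hBb, Finset.mem_filter] at hq hq'
            have h1 : q.1 = q'.1 := heq
            exact Prod.ext h1
              (hbound false q q' hq.1 hq'.1 h1 (by simpa using hq.2) (by simpa using hq'.2)))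
      simpa using this
    calc T.card ≤ (A ∪ Ba ∪ Bb).card := Finset.card_le_card hsub
      _ ≤ (A ∪ Ba).card + Bb.card := Finset.card_union_le _ _
      _ ≤ A.card + Ba.card + Bb.card := by
          exact add_le_add_left (Finset.card_union_le A Ba) Bb.card
      _ ≤ k + 2 * d := by omega
  -- put everything together
  have hsumT : ∑ q ∈ T, F q ≤ C * (k + 2 * d : ℕ) := by
    calc ∑ q ∈ T, F q ≤ ∑ _q ∈ T, C := Finset.sum_le_sum hFC
      _ = T.card * C := by rw [Finset.sum_const, nsmul_eq_mul]
      _ ≤ (k + 2 * d : ℕ) * C := by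
          apply mul_le_mul_of_nonneg_right _ (le_trans zero_le_one hC)
          exact_mod_cast hTcard
      _ = C * (k + 2 * d : ℕ) := mul_comm _ _
  calc ∑ i ∈ range d, N (fun p => if p ∈ E i then xavg p else 0)
      ≤ ∑ j ∈ range d, (1/(k:ℝ)) * ∑ i ∈ range k,
          N (fun p => if p ∈ E j then x i p else 0) :=
        Finset.sum_le_sum (fun j _ => key j)
    _ = (1/(k:ℝ)) * ∑ j ∈ range d, ∑ i ∈ range k,
          N (fun p => if p ∈ E j then x i p else 0) := by
        rw [Finset.mul_sum]
    _ = (1/(k:ℝ)) * ∑ q ∈ T, F q := by rw [hdouble]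
    _ ≤ (1/(k:ℝ)) * (C * (k + 2 * d : ℕ)) := by
        have h0 : (0:ℝ) ≤ 1/(k:ℝ) := by positivity
        exact mul_le_mul_of_nonneg_left hsumT h0
    _ = C * (1 + 2 * (d : ℝ) / (k : ℝ)) := by
        push_cast
        field_simp
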